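/- If a graph G has maximum degree at most d, then for every positive integer p, the vertex set of G can be partitioned into at most d^p + 1 parts such that the union of any p parts induces a subgraph all of whose connected components have at most p vertices. -/

import Mathlib

open Finset

namespace Statement4Aux

open SimpleGraph

/-! ### Walk lemmas -/

/-- A walk in an induced subgraph projects to a walk in the ambient graph. -/
lemma walk_induce {V : Type} {G : SimpleGraph V} {S : Set V} :
    ∀ {x y : S} (w : (G.induce S).Walk x y), ∃ w' : G.Walk x.1 y.1, w'.length = w.length := by
  intro x y w
  induction w with
  | nil => exact ⟨.nil, rfl⟩
  | cons h q ih =>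
    obtain ⟨w', hw'⟩ := ih
    exact ⟨.cons (by exact h) w', by show w'.length + 1 = _ + 1; rw [hw']⟩

/-- Between positions `i ≤ j` of a walk there is a walk of length at most `j - i`. -/
lemma exists_walk_getVert {V : Type} {G : SimpleGraph V} {u v : V} (q : G.Walk u v) :
    ∀ i j : ℕ, i ≤ j → j ≤ q.length →
      ∃ w : G.Walk (q.getVert i) (q.getVert j), w.length ≤ j - i := by
  induction q with
  | nil =>
    intro i j _ hj
    simp only [SimpleGraph.Walk.length_nil, Nat.le_zero] at hj
    subst hj
    interval_cases i
    exact ⟨.nil, by simp⟩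
  | @cons a b c h r ih =>
    intro i j hij hj
    match i, j with
    | i, 0 =>
      have hi0 : i = 0 := Nat.le_zero.mp hij
      subst hi0
      exact ⟨.nil, by simp⟩
    | 0, j + 1 =>
      obtain ⟨w, hw⟩ := ih 0 j (Nat.zero_le _) (by simpa using hj)
      refine ⟨.cons h (w.copy (r.getVert_zero) (SimpleGraph.Walk.getVert_cons_succ r (h := h)).symm), ?_⟩
      show (w.copy _ _).length + 1 ≤ j + 1; rw [SimpleGraph.Walk.length_copy]; omega
    | i + 1, j + 1 =>
      obtain ⟨w, hw⟩ := ih i j (by omega) (by simpa using hj)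
      exact ⟨w, by simpa using hw⟩

/-- Distinct positions (within the length) of a path are distinct vertices. -/
lemma getVert_ne {V : Type} {G : SimpleGraph V} {u v : V} {q : G.Walk u v}
    (hq : q.IsPath) : ∀ i j : ℕ, i < j → j ≤ q.length → q.getVert i ≠ q.getVert j := by
  induction q with
  | nil => intro i j hij hj; simp at hj; omega
  | @cons a b c h r ih =>
    intro i j hij hj
    rw [SimpleGraph.Walk.cons_isPath_iff] at hq
    match i, j with
    | 0, j + 1 =>
      simp only [SimpleGraph.Walk.getVert_zero, SimpleGraph.Walk.getVert_cons_succ]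
      intro hcontra
      exact hq.2 (SimpleGraph.Walk.mem_support_iff_exists_getVert.mpr
        ⟨j, hcontra.symm, by simpa using hj⟩)
    | i + 1, j + 1 =>
      simp only [SimpleGraph.Walk.getVert_cons_succ]
      exact ih hq.1 i j (by omega) (by simpa using hj)

/-! ### Greedy coloring -/

noncomputable def avoidSet {n : ℕ} (H : SimpleGraph (Fin n)) [DecidableRel H.Adj] (D : ℕ)
    (l : List (Fin (D + 1))) (k : ℕ) : Finset (Fin (D + 1)) :=
  if h : k < n then
    ((H.neighborFinset ⟨k, h⟩).filter (fun j : Fin n => (j : ℕ) < k)).image (fun j : Fin n => l.getD (j : ℕ) 0)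
  else ∅

noncomputable def nextColor {n : ℕ} (H : SimpleGraph (Fin n)) [DecidableRel H.Adj] (D : ℕ)
    (l : List (Fin (D + 1))) (k : ℕ) : Fin (D + 1) :=
  if h : (Finset.univ \ avoidSet H D l k).Nonempty then (Finset.univ \ avoidSet H D l k).min' h
  else 0

noncomputable def greedyList {n : ℕ} (H : SimpleGraph (Fin n)) [DecidableRel H.Adj] (D : ℕ) :
    ℕ → List (Fin (D + 1))
  | 0 => []
  | k + 1 => greedyList H D k ++ [nextColor H D (greedyList H D k) k]

noncomputable def greedyColor {n : ℕ} (H : SimpleGraph (Fin n)) [DecidableRel H.Adj] (D : ℕ)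
    (k : ℕ) : Fin (D + 1) :=
  nextColor H D (greedyList H D k) k

lemma length_greedyList {n : ℕ} (H : SimpleGraph (Fin n)) [DecidableRel H.Adj] (D k : ℕ) :
    (greedyList H D k).length = k := by
  induction k with
  | zero => rfl
  | succ k ih => simp [greedyList, ih]

lemma getD_greedyList {n : ℕ} (H : SimpleGraph (Fin n)) [DecidableRel H.Adj] (D : ℕ)
    {j k : ℕ} (hjk : j < k) : (greedyList H D k).getD j 0 = greedyColor H D j := by
  induction k with
  | zero => omega
  | succ k ih =>
    rcases lt_or_eq_of_le (Nat.lt_succ_iff.mp hjk) with hlt | heq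
    · rw [greedyList, List.getD_append _ _ _ _ (by rw [length_greedyList]; exact hlt)]
      exact ih hlt
    · subst heq
      rw [greedyList, List.getD_append_right _ _ _ _ (by rw [length_greedyList])]
      simp [length_greedyList, greedyColor]

lemma greedy_proper {n : ℕ} (H : SimpleGraph (Fin n)) [DecidableRel H.Adj] (D : ℕ)
    (hdeg : ∀ v, H.degree v ≤ D) {i k : Fin n} (hik : (i : ℕ) < (k : ℕ)) (hadj : H.Adj i k) :
    greedyColor H D (i : ℕ) ≠ greedyColor H D (k : ℕ) := by
  have hk : (k : ℕ) < n := k.2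
  have hmem : greedyColor H D (i : ℕ) ∈ avoidSet H D (greedyList H D (k : ℕ)) (k : ℕ) := by
    rw [avoidSet, dif_pos hk]
    refine Finset.mem_image.mpr ⟨i, ?_, getD_greedyList H D hik⟩
    simp only [Finset.mem_filter, SimpleGraph.mem_neighborFinset]
    exact ⟨by simpa using hadj.symm, hik⟩
  have hcard : (avoidSet H D (greedyList H D (k : ℕ)) (k : ℕ)).card ≤ D := by
    rw [avoidSet, dif_pos hk]
    calc _ ≤ ((H.neighborFinset ⟨(k : ℕ), hk⟩).filter (fun j : Fin n => (j : ℕ) < (k : ℕ))).card :=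
          Finset.card_image_le
      _ ≤ (H.neighborFinset ⟨(k : ℕ), hk⟩).card := Finset.card_filter_le _ _
      _ ≤ D := hdeg _
  have hne : (Finset.univ \ avoidSet H D (greedyList H D (k : ℕ)) (k : ℕ)).Nonempty := by
    rw [Finset.sdiff_nonempty]
    intro hsub
    have := Finset.card_le_card hsub
    simp only [Finset.card_univ, Fintype.card_fin] at this
    omega
  have : greedyColor H D (k : ℕ) ∈
      Finset.univ \ avoidSet H D (greedyList H D (k : ℕ)) (k : ℕ) := by
    rw [greedyColor, nextColor, dif_pos hne]
    exact Finset.min'_mem _ _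
  intro hcontra
  rw [hcontra] at hmem
  exact (Finset.mem_sdiff.mp this).2 hmem

lemma exists_proper_coloring {V : Type} [Fintype V] (H : SimpleGraph V) [DecidableRel H.Adj]
    (D : ℕ) (hdeg : ∀ v, H.degree v ≤ D) :
    ∃ c : V → Fin (D + 1), ∀ u v, H.Adj u v → c u ≠ c v := by
  classical
  set n := Fintype.card V with hn
  let e : V ≃ Fin n := Fintype.equivFin V
  let H' : SimpleGraph (Fin n) := H.comap e.symm
  haveI : DecidableRel H'.Adj := fun a b => ‹DecidableRel H.Adj› _ _
  have hdeg' : ∀ i : Fin n, H'.degree i ≤ D := by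
    intro i
    have : H'.neighborFinset i = (H.neighborFinset (e.symm i)).map e.toEmbedding := by
      ext j
      rw [Finset.mem_map_equiv]
      simp [H', SimpleGraph.comap_adj]
    rw [SimpleGraph.degree, this, Finset.card_map]
    exact hdeg _
  refine ⟨fun v => greedyColor H' D (e v : ℕ), fun u v huv => ?_⟩
  have hadj' : H'.Adj (e u) (e v) := by simp [H', SimpleGraph.comap_adj, huv]
  have hne : (e u : ℕ) ≠ (e v : ℕ) := by
    intro h
    exact huv.ne (e.injective (Fin.ext h))
  rcases lt_or_gt_of_ne hne with hlt | hgt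
  · exact greedy_proper H' D hdeg' hlt hadj'
  · exact (greedy_proper H' D hdeg' hgt hadj'.symm).symm

/-! ### Ball size bound -/

open scoped Classical in
lemma ball_card_le {V : Type} [Fintype V] (G : SimpleGraph V) [DecidableRel G.Adj]
    (d : ℕ) (hd : ∀ v, G.degree v ≤ d) :
    ∀ q : ℕ, 0 < q → ∀ (v : V) (s : Finset V),
      (∀ w ∈ s, v ≠ w ∧ ∃ wk : G.Walk v w, wk.length ≤ q) → s.card ≤ d ^ q := by
  intro q
  induction q with
  | zero => omega
  | succ q ih =>
    intro _ v s hs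
    rcases Nat.eq_zero_or_pos q with hq0 | hq
    · subst hq0
      have hsub : s ⊆ G.neighborFinset v := by
        intro w hw
        obtain ⟨hne, wk, hlen⟩ := hs w hw
        cases wk with
        | nil => exact absurd rfl hne
        | cons h r =>
          have : r.length = 0 := by simpa using hlen
          rw [SimpleGraph.mem_neighborFinset]
          exact (SimpleGraph.Walk.eq_of_length_eq_zero this) ▸ h
      calc _ ≤ (G.neighborFinset v).card := Finset.card_le_card hsub
        _ ≤ d := hd v
        _ ≤ d ^ 1 := by rw [pow_one]
    · have hsub : s ⊆
          (G.neighborFinset v).biUnion (fun u =>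
            (insert u (Finset.univ.filter
              (fun w => u ≠ w ∧ ∃ wk : G.Walk u w, wk.length ≤ q))).erase v) := by
        intro w hw
        obtain ⟨hne, wk, hlen⟩ := hs w hw
        cases wk with
        | nil => exact absurd rfl hne
        | @cons _ u _ h r =>
          refine Finset.mem_biUnion.mpr ⟨u, (G.mem_neighborFinset _ _).mpr h, ?_⟩
          rw [Finset.mem_erase]
          refine ⟨hne.symm, ?_⟩
          by_cases hwu : w = u
          · exact Finset.mem_insert.mpr (Or.inl hwu)
          · refine Finset.mem_insert.mpr (Or.inr ?_)
            refine Finset.mem_filter.mpr ⟨Finset.mem_univ _, fun h' => hwu h'.symm, ⟨r, ?_⟩⟩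
            have : r.length + 1 ≤ q + 1 := by simpa using hlen
            omega
      calc _ ≤ ((G.neighborFinset v).biUnion (fun u =>
              (insert u (Finset.univ.filter
                (fun w => u ≠ w ∧ ∃ wk : G.Walk u w, wk.length ≤ q))).erase v)).card :=
            Finset.card_le_card hsub
        _ ≤ ∑ u ∈ G.neighborFinset v,
              ((insert u (Finset.univ.filter
                (fun w => u ≠ w ∧ ∃ wk : G.Walk u w, wk.length ≤ q))).erase v).card :=
            Finset.card_biUnion_le
        _ ≤ ∑ _u ∈ G.neighborFinset v, d ^ q := by
            refine Finset.sum_le_sum fun u hu => ?_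
            have hadj : G.Adj v u := (G.mem_neighborFinset _ _).mp hu
            have hvmem : v ∈ insert u (Finset.univ.filter
                (fun w => u ≠ w ∧ ∃ wk : G.Walk u w, wk.length ≤ q)) := by
              refine Finset.mem_insert.mpr (Or.inr ?_)
              refine Finset.mem_filter.mpr ⟨Finset.mem_univ _, hadj.ne', ?_⟩
              exact ⟨SimpleGraph.Walk.cons hadj.symm SimpleGraph.Walk.nil, by simp; omega⟩
            rw [Finset.card_erase_of_mem hvmem]
            have h1 := Finset.card_insert_le u (Finset.univ.filter
                (fun w => u ≠ w ∧ ∃ wk : G.Walk u w, wk.length ≤ q))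
            have h2 := ih hq u (Finset.univ.filter
                (fun w => u ≠ w ∧ ∃ wk : G.Walk u w, wk.length ≤ q))
                (fun w hw => (Finset.mem_filter.mp hw).2)
            omega
        _ ≤ (G.neighborFinset v).card * d ^ q := by rw [Finset.sum_const, smul_eq_mul]
        _ ≤ d * d ^ q := Nat.mul_le_mul_right _ (hd v)
        _ = d ^ (q + 1) := by rw [pow_succ, mul_comm]

end Statement4Aux

theorem statement4 {V : Type} [Fintype V] (G : SimpleGraph V) [DecidableRel G.Adj]
    (d p : ℕ) (hp : 0 < p) (hd : ∀ v, G.degree v ≤ d) :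
    ∃ c : V → Fin (d ^ p + 1), ∀ I : Finset (Fin (d ^ p + 1)), I.card ≤ p →
      ∀ K : (G.induce {v | c v ∈ I}).ConnectedComponent, K.supp.ncard ≤ p := by
  classical
  -- the p-th power graph
  let H : SimpleGraph V :=
    { Adj := fun u v => u ≠ v ∧ ∃ w : G.Walk u v, w.length ≤ p
      symm := by
        refine ⟨?_⟩; rintro u v ⟨hne, w, hw⟩
        exact ⟨hne.symm, w.reverse, by simpa using hw⟩
      loopless := by refine ⟨?_⟩; rintro u ⟨hne, -⟩; exact hne rfl }
  haveI : DecidableRel H.Adj := fun a b => Classical.dec _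
  have hHdeg : ∀ v, H.degree v ≤ d ^ p := by
    intro v
    exact Statement4Aux.ball_card_le G d hd p hp v (H.neighborFinset v)
      (fun w hw => (H.mem_neighborFinset v w).mp hw)
  obtain ⟨c, hc⟩ := Statement4Aux.exists_proper_coloring H (d ^ p) hHdeg
  refine ⟨c, fun I hI K => ?_⟩
  let S : Set V := {v | c v ∈ I}
  -- the coloring map is injective on the support of K
  have hinj : Set.InjOn (fun x : S => c x.1) K.supp := by
    intro x hx y hy hcxy
    by_contra hxy
    have hreach : (G.induce S).Reachable x y := by
      rw [SimpleGraph.ConnectedComponent.mem_supp_iff] at hx hy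
      exact SimpleGraph.ConnectedComponent.exact (hx.trans hy.symm)
    obtain ⟨w⟩ := hreach
    obtain ⟨q, hqp⟩ : ∃ q : (G.induce S).Walk x y, q.IsPath := ⟨w.toPath.1, w.toPath.2⟩
    by_cases hlen : q.length ≤ p
    · obtain ⟨w', hw'⟩ := Statement4Aux.walk_induce q
      have hadj : H.Adj x.1 y.1 :=
        ⟨fun h => hxy (Subtype.ext h), w', by rw [hw']; exact hlen⟩
      exact hc _ _ hadj hcxy
    · push_neg at hlen
      have key : ∀ i j : Fin (p + 1), (i : ℕ) < (j : ℕ) →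
          c (q.getVert i).1 ≠ c (q.getVert j).1 := by
        intro i j hij
        have hjle : (j : ℕ) ≤ q.length := le_of_lt (lt_of_le_of_lt (Nat.lt_succ_iff.mp j.2) hlen)
        have hvne : q.getVert (i : ℕ) ≠ q.getVert (j : ℕ) :=
          Statement4Aux.getVert_ne hqp _ _ hij hjle
        obtain ⟨w2, hw2⟩ := Statement4Aux.exists_walk_getVert q i j (le_of_lt hij) hjle
        obtain ⟨w3, hw3⟩ := Statement4Aux.walk_induce w2
        have hadj : H.Adj (q.getVert (i : ℕ)).1 (q.getVert (j : ℕ)).1 := by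
          refine ⟨fun h => hvne (Subtype.ext h), w3, ?_⟩
          rw [hw3]
          have : (j : ℕ) - (i : ℕ) ≤ p := by omega
          omega
        exact hc _ _ hadj
      have hginj : Function.Injective
          (fun i : Fin (p + 1) => (⟨c (q.getVert i).1, (q.getVert i).2⟩ : {a // a ∈ I})) := by
        intro i j hij
        by_contra hne
        have hcc : c (q.getVert (i : ℕ)).1 = c (q.getVert (j : ℕ)).1 := congrArg Subtype.val hij
        rcases lt_or_gt_of_ne (fun h : (i : ℕ) = (j : ℕ) => hne (Fin.ext h)) with hlt | hgt
        · exact key i j hlt hcc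
        · exact key j i hgt hcc.symm
      have := Fintype.card_le_of_injective _ hginj
      simp only [Fintype.card_fin, Fintype.card_coe] at this
      omega
  calc K.supp.ncard = ((fun x : S => c x.1) '' K.supp).ncard :=
        (Set.ncard_image_of_injOn hinj).symm
    _ ≤ (↑I : Set (Fin (d ^ p + 1))).ncard := by
        refine Set.ncard_le_ncard ?_ I.finite_toSet
        rintro a ⟨x, -, rfl⟩
        exact x.2
    _ = I.card := Set.ncard_coe_finset I
    _ ≤ p := hI
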